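/- arXiv:2206.08774 — 4 statements merged into one kernel-verified Lean document; each statement's English description precedes it below -/
import Mathlib

section
/- Let A, B : S → ℝ₊₊ be functions on a set S and R : ℝ → ℝ be nondecreasing. Then sup_{p ∈ S} R(A(p)/B(p)) = sup_{p ∈ S} sup_{z ∈ ℝ} R(2z√(A(p)) − z²B(p)), and for each fixed p the inner supremum over z is attained at z = √(A(p))/B(p). -/
lemma quad_key (a b : ℝ) (ha : 0 < a) (hb : 0 < b) :
    (∀ z : ℝ, 2 * z * Real.sqrt a - z ^ 2 * b ≤ a / b) ∧
    2 * (Real.sqrt a / b) * Real.sqrt a - (Real.sqrt a / b) ^ 2 * b = a / b := by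
  have hs : Real.sqrt a ^ 2 = a := Real.sq_sqrt ha.le
  constructor
  · intro z
    rw [le_div_iff₀ hb]
    nlinarith [sq_nonneg (z * b - Real.sqrt a), hs]
  · field_simp
    ring_nf
    linear_combination hs

/-- Quadratic transform for a single-ratio problem: the sup of `R(A/B)` equals the joint sup
over `p` and the auxiliary variable `z`, and the inner sup is attained at `z = √(A p)/B p`. -/
theorem stmt_3 {S : Type*} (A B : S → ℝ) (R : ℝ → ℝ)
    (hA : ∀ p, 0 < A p) (hB : ∀ p, 0 < B p) (hR : Monotone R) :
    (⨆ p, R (A p / B p)) =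
      (⨆ p, ⨆ z : ℝ, R (2 * z * Real.sqrt (A p) - z ^ 2 * B p)) ∧
    ∀ p : S,
      (∀ z : ℝ, R (2 * z * Real.sqrt (A p) - z ^ 2 * B p) ≤
        R (2 * (Real.sqrt (A p) / B p) * Real.sqrt (A p)
            - (Real.sqrt (A p) / B p) ^ 2 * B p)) ∧
      (⨆ z : ℝ, R (2 * z * Real.sqrt (A p) - z ^ 2 * B p)) =
        R (2 * (Real.sqrt (A p) / B p) * Real.sqrt (A p)
            - (Real.sqrt (A p) / B p) ^ 2 * B p) := by
  have key : ∀ p : S,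
      (∀ z : ℝ, R (2 * z * Real.sqrt (A p) - z ^ 2 * B p) ≤
        R (2 * (Real.sqrt (A p) / B p) * Real.sqrt (A p)
            - (Real.sqrt (A p) / B p) ^ 2 * B p)) ∧
      (⨆ z : ℝ, R (2 * z * Real.sqrt (A p) - z ^ 2 * B p)) =
        R (2 * (Real.sqrt (A p) / B p) * Real.sqrt (A p)
            - (Real.sqrt (A p) / B p) ^ 2 * B p) := by
    intro p
    obtain ⟨hle, heq⟩ := quad_key (A p) (B p) (hA p) (hB p)
    have hle' : ∀ z : ℝ, R (2 * z * Real.sqrt (A p) - z ^ 2 * B p) ≤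
        R (2 * (Real.sqrt (A p) / B p) * Real.sqrt (A p)
            - (Real.sqrt (A p) / B p) ^ 2 * B p) := by
      intro z
      apply hR
      rw [heq]; exact hle z
    refine ⟨hle', le_antisymm (ciSup_le hle') ?_⟩
    have hbdd : BddAbove (Set.range fun z : ℝ => R (2 * z * Real.sqrt (A p) - z ^ 2 * B p)) := by
      refine ⟨R (2 * (Real.sqrt (A p) / B p) * Real.sqrt (A p) - (Real.sqrt (A p) / B p) ^ 2 * B p), ?_⟩
      rintro x ⟨z, rfl⟩
      exact hle' z
    exact le_ciSup hbdd (Real.sqrt (A p) / B p)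
  refine ⟨?_, key⟩
  apply iSup_congr
  intro p
  rw [(key p).2, (quad_key (A p) (B p) (hA p) (hB p)).2]
end

section
/- Let R₁,…,R_K : ℝ → ℝ be nondecreasing functions and A_k, B_k : S → ℝ₊₊. Then sup_{p ∈ S} Σ_k R_k(A_k(p)/B_k(p)) = sup_{p ∈ S} sup_{z ∈ ℝ^K} Σ_k R_k(2 z_k √(A_k(p)) − z_k² B_k(p)). -/
/-- Sum-of-functions-of-ratios quadratic transform. -/
theorem stmt_4 {S : Type*} (K : ℕ) (R : Fin K → ℝ → ℝ) (A B : Fin K → S → ℝ)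
    (hR : ∀ k, Monotone (R k)) (hA : ∀ k p, 0 < A k p) (hB : ∀ k p, 0 < B k p) :
    (⨆ p, ∑ k, R k (A k p / B k p)) =
      ⨆ p, ⨆ z : Fin K → ℝ,
        ∑ k, R k (2 * z k * Real.sqrt (A k p) - (z k) ^ 2 * B k p) := by
  have key : ∀ p, (⨆ z : Fin K → ℝ,
      ∑ k, R k (2 * z k * Real.sqrt (A k p) - (z k) ^ 2 * B k p))
      = ∑ k, R k (A k p / B k p) := by
    intro p
    have hle : ∀ z : Fin K → ℝ,
        (∑ k, R k (2 * z k * Real.sqrt (A k p) - (z k) ^ 2 * B k p))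
        ≤ ∑ k, R k (A k p / B k p) := by
      intro z
      refine Finset.sum_le_sum fun k _ => hR k ?_
      have hBk := hB k p
      have hAk := hA k p
      have hsq : 0 ≤ (Real.sqrt (A k p) - z k * B k p) ^ 2 := sq_nonneg _
      have hA' : Real.sqrt (A k p) ^ 2 = A k p := Real.sq_sqrt hAk.le
      rw [le_div_iff₀ hBk]
      nlinarith [hsq, hA', hBk]
    refine le_antisymm (ciSup_le hle) ?_
    have : (∑ k, R k (A k p / B k p)) =
        ∑ k, R k (2 * (fun k => Real.sqrt (A k p) / B k p) k * Real.sqrt (A k p)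
          - ((fun k => Real.sqrt (A k p) / B k p) k) ^ 2 * B k p) := by
      refine Finset.sum_congr rfl fun k _ => ?_
      congr 1
      have hBk := (hB k p).ne'
      have hA' : Real.sqrt (A k p) ^ 2 = A k p := Real.sq_sqrt (hA k p).le
      have hm : Real.sqrt (A k p) * Real.sqrt (A k p) = A k p :=
        Real.mul_self_sqrt (hA k p).le
      field_simp
      linear_combination -hA'
    rw [this]
    exact le_ciSup ⟨∑ k, R k (A k p / B k p), fun x ⟨z, hz⟩ => hz ▸ hle z⟩ _
  exact (iSup_congr fun p => (key p)).symm
end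

section
/- Let M̄, D, U be positive integers with M̄ ≥ D·U, and let ϑ = ⌊M̄/D⌋. For d = 1,…,D define the pilot sequence x_d ∈ ℂ^{M̄} by (x_d)_k = exp(j2π(k−1)(d−1)ϑ/M̄) for k = 1,…,M̄, and set J_d = X_d Φ F Ψ, where X_d = diag(x_d), Φ selects the M̄ evenly spaced uplink subcarrier rows out of M_sum total subcarriers, F is the M_sum-point unitary DFT matrix, and Ψ consists of the first U columns of I_{M_sum}. Then J_dᴴ J_d = (M̄/M_sum) I_U for every d, and J_dᴴ J_k = 0 for all d ≠ k. -/
open Complex Matrix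

lemma sum_exp_dvd (n : ℕ) (hn : 0 < n) (t : ℤ) :
    ∑ k : Fin n, Complex.exp (2 * Real.pi * I * (k : ℕ) * t / n) =
      if (n : ℤ) ∣ t then (n : ℂ) else 0 := by
  have hn0 : (n : ℂ) ≠ 0 := Nat.cast_ne_zero.mpr hn.ne'
  have hterm : ∀ k : ℕ, Complex.exp (2 * Real.pi * I * k * t / n)
      = Complex.exp (2 * Real.pi * I * t / n) ^ k := by
    intro k
    rw [← Complex.exp_nat_mul]
    congr 1
    field_simp
  have hpow : Complex.exp (2 * Real.pi * I * t / n) ^ n = 1 := by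
    rw [← Complex.exp_nat_mul,
      show (n : ℂ) * (2 * Real.pi * I * t / n) = (t : ℂ) * (2 * Real.pi * I) by
        field_simp]
    exact Complex.exp_int_mul_two_pi_mul_I t
  by_cases hdvd : (n : ℤ) ∣ t
  · obtain ⟨m, rfl⟩ := hdvd
    have hζ : Complex.exp (2 * Real.pi * I * (((n:ℤ)*m : ℤ) : ℂ) / n) = 1 := by
      rw [show (2 * Real.pi * I * (((n:ℤ)*m : ℤ) : ℂ) / n : ℂ) = (m : ℂ) * (2 * Real.pi * I) by
        push_cast; field_simp]
      exact Complex.exp_int_mul_two_pi_mul_I m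
    simp only [hterm, hζ, one_pow, Finset.sum_const, Finset.card_univ, Fintype.card_fin,
      nsmul_eq_mul, mul_one, if_pos (Dvd.intro m rfl)]
  · have hζ1 : Complex.exp (2 * Real.pi * I * t / n) ≠ 1 := by
      intro h
      rw [Complex.exp_eq_one_iff] at h
      obtain ⟨m, hm⟩ := h
      apply hdvd
      refine ⟨m, ?_⟩
      have hπ : (Real.pi : ℂ) ≠ 0 := ofReal_ne_zero.mpr Real.pi_ne_zero
      have hI : (I : ℂ) ≠ 0 := I_ne_zero
      field_simp at hm
      have : (t : ℂ) = ((n * m : ℤ) : ℂ) := by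
        push_cast
        have h2 : (2 * (Real.pi:ℂ) * I) ≠ 0 := by
          simp [hπ, hI]
        apply mul_left_cancel₀ h2
        linear_combination (2 * (Real.pi:ℂ) * I) * hm
      exact_mod_cast this
    rw [show (∑ k : Fin n, Complex.exp (2 * Real.pi * I * (k:ℕ) * t / n))
        = ∑ k ∈ Finset.range n, Complex.exp (2 * Real.pi * I * t / n) ^ k by
        rw [← Fin.sum_univ_eq_sum_range fun k => Complex.exp (2 * Real.pi * I * t / n) ^ k]
        exact Finset.sum_congr rfl fun k _ => hterm k]
    rw [geom_sum_eq hζ1, hpow]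
    simp [hdvd]
/-- Mutual orthogonality of the frequency-domain pilot projection matrices `J_d`. -/
theorem stmt_6 (Mbar D U s : ℕ) (hD : 0 < D) (hU : 0 < U) (hs : 0 < s)
    (hMbar : D * U ≤ Mbar) (Msum : ℕ) (hMsum : Msum = Mbar * s)
    (ϑ : ℕ) (hϑ : ϑ = Mbar / D)
    (hMbarpos : 0 < Mbar)
    (F : Matrix (Fin Msum) (Fin Msum) ℂ)
    (hF : ∀ a b : Fin Msum, F a b =
      (1 / Real.sqrt Msum : ℝ) * Complex.exp (-2 * Real.pi * I * (a : ℕ) * (b : ℕ) / Msum))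
    (Ψ : Matrix (Fin Msum) (Fin U) ℂ)
    (hΨ : ∀ a u, Ψ a u = if (a : ℕ) = (u : ℕ) then 1 else 0)
    (Φ : Matrix (Fin Mbar) (Fin Msum) ℂ)
    (hΦ : ∀ k n, Φ k n = if (n : ℕ) = (k : ℕ) * s then 1 else 0)
    (x : Fin D → Fin Mbar → ℂ)
    (hx : ∀ d k, x d k =
      Complex.exp (2 * Real.pi * I * (k : ℕ) * (d : ℕ) * ϑ / Mbar))
    (J : Fin D → Matrix (Fin Mbar) (Fin U) ℂ)
    (hJ : ∀ d, J d = Matrix.diagonal (x d) * Φ * F * Ψ) :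
    (∀ d : Fin D, (J d)ᴴ * J d = ((Mbar : ℂ) / (Msum : ℂ)) • (1 : Matrix (Fin U) (Fin U) ℂ)) ∧
    (∀ d k : Fin D, d ≠ k → (J d)ᴴ * J k = 0) := by
  have hUMbar : U ≤ Mbar := le_trans (Nat.le_mul_of_pos_left U hD) hMbar
  have hMbarMsum : Mbar ≤ Msum := by rw [hMsum]; exact Nat.le_mul_of_pos_right Mbar hs
  have hMsumpos : 0 < Msum := lt_of_lt_of_le hMbarpos hMbarMsum
  have hMb0 : (Mbar : ℂ) ≠ 0 := Nat.cast_ne_zero.mpr hMbarpos.ne'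
  have hMs0 : (Msum : ℂ) ≠ 0 := Nat.cast_ne_zero.mpr hMsumpos.ne'
  have hs0 : (s : ℂ) ≠ 0 := Nat.cast_ne_zero.mpr hs.ne'
  have hks : ∀ k : Fin Mbar, (k : ℕ) * s < Msum := by
    intro k; rw [hMsum]; exact (Nat.mul_lt_mul_right hs).mpr k.isLt
  have huM : ∀ u : Fin U, (u : ℕ) < Msum := fun u =>
    lt_of_lt_of_le u.isLt (le_trans hUMbar hMbarMsum)
  -- entry formula for J
  have hJe : ∀ (d : Fin D) (k : Fin Mbar) (u : Fin U),
      J d k u = ((Real.sqrt Msum : ℝ)⁻¹ : ℂ) *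
        Complex.exp (2 * Real.pi * I * (k : ℕ) * ((((d : ℕ) * ϑ : ℕ) : ℤ) - ((u : ℕ) : ℤ)) / Mbar) := by
    intro d k u
    have h1 : (Matrix.diagonal (x d) * Φ * F) k = fun a => x d k * F ⟨(k : ℕ) * s, hks k⟩ a := by
      funext a
      rw [Matrix.mul_apply]
      rw [Finset.sum_eq_single (⟨(k : ℕ) * s, hks k⟩ : Fin Msum)]
      · rw [Matrix.diagonal_mul, hΦ]; simp
      · intro n _ hn
        rw [Matrix.diagonal_mul, hΦ, if_neg, mul_zero, zero_mul]
        intro h; exact hn (Fin.ext h)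
      · simp
    have h2 : J d k u = x d k * F ⟨(k : ℕ) * s, hks k⟩ ⟨(u : ℕ), huM u⟩ := by
      rw [hJ, Matrix.mul_apply]
      rw [Finset.sum_eq_single (⟨(u : ℕ), huM u⟩ : Fin Msum)]
      · rw [h1, hΨ]; simp
      · intro a _ ha
        rw [hΨ, if_neg, mul_zero]
        intro h; exact ha (Fin.ext h)
      · simp
    rw [h2, hx, hF]
    simp only [Fin.val_mk]
    rw [mul_left_comm, ← Complex.exp_add]
    have hMsC : (Msum : ℂ) = (Mbar : ℂ) * s := by rw [hMsum]; push_cast; ring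
    congr 1
    · push_cast; ring
    · congr 1
      rw [hMsC]
      push_cast
      field_simp
      ring
  -- key formula
  have key : ∀ (d e : Fin D) (u v : Fin U),
      ((J d)ᴴ * J e) u v = ((Msum : ℂ))⁻¹ *
        (if (Mbar : ℤ) ∣ ((e : ℕ) : ℤ) * ϑ - ((d : ℕ) : ℤ) * ϑ + (u : ℕ) - (v : ℕ)
          then (Mbar : ℂ) else 0) := by
    intro d e u v
    rw [Matrix.mul_apply]
    have hsq : ((Real.sqrt Msum : ℝ)⁻¹ : ℂ) * ((Real.sqrt Msum : ℝ)⁻¹ : ℂ) = ((Msum : ℂ))⁻¹ := by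
      rw [← Complex.ofReal_inv, ← Complex.ofReal_mul, ← mul_inv,
        Real.mul_self_sqrt (Nat.cast_nonneg _)]
      push_cast; ring
    have hterm : ∀ k : Fin Mbar,
        (J d)ᴴ u k * J e k v = ((Msum : ℂ))⁻¹ *
          Complex.exp (2 * Real.pi * I * (k : ℕ) *
            ((((e : ℕ) : ℤ) * ϑ - ((d : ℕ) : ℤ) * ϑ + (u : ℕ) - (v : ℕ) : ℤ) : ℂ) / Mbar) := by
      intro k
      rw [Matrix.conjTranspose_apply, hJe d k u, hJe e k v, Complex.star_def,
        map_mul (starRingEnd ℂ), ← Complex.exp_conj]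
      have hc1 : (starRingEnd ℂ) (((Real.sqrt Msum : ℝ)⁻¹ : ℂ)) = ((Real.sqrt Msum : ℝ)⁻¹ : ℂ) := by
        rw [← Complex.ofReal_inv]; exact Complex.conj_ofReal _
      have hc2 : (starRingEnd ℂ)
          (2 * Real.pi * I * (k : ℕ) * ((((d : ℕ) * ϑ : ℕ) : ℤ) - ((u : ℕ) : ℤ)) / Mbar)
          = -(2 * Real.pi * I * (k : ℕ) * ((((d : ℕ) * ϑ : ℕ) : ℤ) - ((u : ℕ) : ℤ)) / Mbar) := by
        simp only [map_div₀, _root_.map_mul, map_sub, map_ofNat, Complex.conj_ofReal,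
          Complex.conj_I, map_natCast, map_intCast]
        push_cast
        ring
      rw [hc1, hc2]
      rw [mul_mul_mul_comm, hsq, ← Complex.exp_add]
      congr 2
      push_cast
      field_simp
      ring
    rw [Finset.sum_congr rfl fun k _ => hterm k, ← Finset.mul_sum]
    congr 1
    exact sum_exp_dvd Mbar hMbarpos _
  have small : ∀ t : ℤ, t ≠ 0 → |t| < (Mbar : ℤ) → ¬ (Mbar : ℤ) ∣ t := by
    intro t ht0 hlt hdvd
    exact absurd (Int.le_of_dvd (abs_pos.mpr ht0) ((dvd_abs _ _).mpr hdvd)) (not_le.mpr hlt)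
  have hUϑ : U ≤ ϑ := by
    rw [hϑ]
    exact (Nat.le_div_iff_mul_le hD).mpr (by rw [mul_comm]; exact hMbar)
  have hDϑ : D * ϑ ≤ Mbar := by
    rw [hϑ, mul_comm]
    exact Nat.div_mul_le_self Mbar D
  constructor
  · intro d
    ext u v
    rw [key d d u v]
    simp only [Matrix.smul_apply, Matrix.one_apply, smul_eq_mul]
    by_cases huv : u = v
    · subst huv
      rw [if_pos (by exact ⟨0, by ring⟩), if_pos rfl]
      field_simp
    · rw [if_neg, if_neg huv, mul_zero, mul_zero]
      apply small
      · have : (u : ℕ) ≠ (v : ℕ) := fun h => huv (Fin.ext h)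
        omega
      · rw [abs_lt]
        have hu' := u.isLt
        have hv' := v.isLt
        have hd' := d.isLt
        have h1 := hUMbar
        constructor <;> omega
  · intro d e hde
    ext u v
    rw [key d e u v, if_neg, mul_zero]
    · simp
    have hde' : (d : ℕ) ≠ (e : ℕ) := fun h => hde (Fin.ext h)
    set m : ℤ := ((e : ℕ) : ℤ) - ((d : ℕ) : ℤ) with hm
    have hm0 : m ≠ 0 := by simp only [hm]; omega
    have h1 : (1 : ℤ) ≤ |m| := Int.one_le_abs hm0
    have h2 : |m| ≤ (D : ℤ) - 1 := by
      rw [abs_le]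
      have := d.isLt
      have := e.isLt
      simp only [hm]
      omega
    have hϑ0 : (0 : ℤ) ≤ (ϑ : ℤ) := Int.natCast_nonneg _
    have habs_m : |m * (ϑ : ℤ)| = |m| * ϑ := by
      rw [abs_mul, abs_of_nonneg hϑ0]
    have hlow : (ϑ : ℤ) ≤ |m * (ϑ : ℤ)| := by
      rw [habs_m]
      nlinarith
    have hhigh : |m * (ϑ : ℤ)| ≤ ((D : ℤ) - 1) * ϑ := by
      rw [habs_m]
      nlinarith
    have huv : |((u : ℕ) : ℤ) - ((v : ℕ) : ℤ)| ≤ (U : ℤ) - 1 := by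
      rw [abs_le]
      have := u.isLt
      have := v.isLt
      omega
    set t : ℤ := ((e : ℕ) : ℤ) * ϑ - ((d : ℕ) : ℤ) * ϑ + ((u : ℕ) : ℤ) - ((v : ℕ) : ℤ) with ht
    have hteq : t = m * (ϑ : ℤ) + (((u : ℕ) : ℤ) - ((v : ℕ) : ℤ)) := by
      simp only [ht, hm]; ring
    have habs1 : |m * (ϑ : ℤ)| - |((u : ℕ) : ℤ) - ((v : ℕ) : ℤ)| ≤ |t| := by
      calc |m * (ϑ : ℤ)| - |((u : ℕ) : ℤ) - ((v : ℕ) : ℤ)|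
          = |m * (ϑ : ℤ)| - |-(((u : ℕ) : ℤ) - ((v : ℕ) : ℤ))| := by rw [abs_neg]
        _ ≤ |m * (ϑ : ℤ) - -(((u : ℕ) : ℤ) - ((v : ℕ) : ℤ))| := abs_sub_abs_le_abs_sub _ _
        _ = |t| := by rw [hteq]; ring_nf
    have habs2 : |t| ≤ |m * (ϑ : ℤ)| + |((u : ℕ) : ℤ) - ((v : ℕ) : ℤ)| := by
      rw [hteq]; exact abs_add_le _ _
    have hUZ : (U : ℤ) ≤ (ϑ : ℤ) := Int.ofNat_le.mpr hUϑ
    have hU1 : (1 : ℤ) ≤ (U : ℤ) := by exact_mod_cast hU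
    have hDϑZ : (D : ℤ) * (ϑ : ℤ) ≤ (Mbar : ℤ) := by exact_mod_cast hDϑ
    apply small
    · intro h0
      rw [h0] at habs1
      simp at habs1
      linarith
    · have hexp : ((D : ℤ) - 1) * (ϑ : ℤ) = (D : ℤ) * ϑ - ϑ := by ring
      have h3 := le_abs_self t
      have h4 := neg_abs_le t
      rw [hexp] at hhigh
      rw [abs_lt]
      constructor <;> linarith
end

section
/- Let F : ℝⁿ → ℝ and let {p^(t)} be generated by the block-coordinate QT iteration: z^(t) = √(A(p^(t)))/B(p^(t)) and p^(t+1) ∈ argmax_p Σ_k R_k(2 z_k^(t) √(A_k(p)) − (z_k^(t))² B_k(p)) over a fixed convex feasible set, where each R_k is nondecreasing and concave and A_k, B_k > 0 on the feasible set. Then the objective sequence F(p^(t)) = Σ_k R_k(A_k(p^(t))/B_k(p^(t))) is nondecreasing in t. -/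
/-- Monotone ascent of the block-coordinate QT iteration: alternately setting
`z^(t) = √(A(p^(t)))/B(p^(t))` and maximizing the quadratic-transform surrogate in `p`
never decreases the original sum-of-ratios objective. -/
theorem stmt_14 {n : ℕ} (K : ℕ) (S : Set (Fin n → ℝ)) (hS : Convex ℝ S)
    (R : Fin K → ℝ → ℝ) (A B : Fin K → (Fin n → ℝ) → ℝ)
    (hR : ∀ k, Monotone (R k)) (hRconc : ∀ k, ConcaveOn ℝ Set.univ (R k))
    (hA : ∀ k q, q ∈ S → 0 < A k q) (hB : ∀ k q, q ∈ S → 0 < B k q)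
    (p : ℕ → (Fin n → ℝ)) (hp : ∀ t, p t ∈ S)
    (z : ℕ → Fin K → ℝ)
    (hz : ∀ t k, z t k = Real.sqrt (A k (p t)) / B k (p t))
    (hmax : ∀ t, ∀ q ∈ S,
      ∑ k, R k (2 * z t k * Real.sqrt (A k q) - (z t k) ^ 2 * B k q) ≤
        ∑ k, R k (2 * z t k * Real.sqrt (A k (p (t + 1))) - (z t k) ^ 2 * B k (p (t + 1)))) :
    ∀ t, ∑ k, R k (A k (p t) / B k (p t)) ≤ ∑ k, R k (A k (p (t + 1)) / B k (p (t + 1))) := by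
  intro t
  -- Step 1: at q = p t the surrogate equals the true objective.
  have h1 : ∑ k, R k (A k (p t) / B k (p t)) =
      ∑ k, R k (2 * z t k * Real.sqrt (A k (p t)) - (z t k) ^ 2 * B k (p t)) := by
    refine Finset.sum_congr rfl fun k _ => ?_
    congr 1
    have hApos := hA k (p t) (hp t)
    have hBpos := hB k (p t) (hp t)
    set s := Real.sqrt (A k (p t)) with hsdef
    have hs : s * s = A k (p t) := Real.mul_self_sqrt hApos.le
    rw [hz t k]
    field_simp
    rw [← hsdef, ← hs]
    ring
  -- Step 2: the surrogate underestimates the true objective at any feasible q.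
  have h2 : ∀ q ∈ S, ∀ k : Fin K,
      2 * z t k * Real.sqrt (A k q) - (z t k) ^ 2 * B k q ≤ A k q / B k q := by
    intro q hq k
    have hApos := hA k q hq
    have hBpos := hB k q hq
    set s := Real.sqrt (A k q) with hsdef
    have hs : s * s = A k q := Real.mul_self_sqrt hApos.le
    have key : 0 ≤ (s - z t k * B k q) ^ 2 / B k q := by positivity
    have heq : A k q / B k q - (2 * z t k * s - (z t k) ^ 2 * B k q)
        = (s - z t k * B k q) ^ 2 / B k q := by
      field_simp
      nlinarith [hs]
    linarith
  calc ∑ k, R k (A k (p t) / B k (p t))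
      = ∑ k, R k (2 * z t k * Real.sqrt (A k (p t)) - (z t k) ^ 2 * B k (p t)) := h1
    _ ≤ ∑ k, R k (2 * z t k * Real.sqrt (A k (p (t + 1))) - (z t k) ^ 2 * B k (p (t + 1))) :=
        hmax t (p t) (hp t)
    _ ≤ ∑ k, R k (A k (p (t + 1)) / B k (p (t + 1))) :=
        Finset.sum_le_sum fun k _ => hR k (h2 (p (t + 1)) (hp (t + 1)) k)
end
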